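/- If n is odd, there is no symmetric OMZD(n): any symmetric orthogonal real matrix (with A·Aᵀ = cI, c > 0) with zero trace has its eigenvalues ±√c occurring with equal multiplicity, which is impossible in odd dimension. -/

import Mathlib

open Matrix

/-- An `n × n` real matrix is an OMZD: `A * Aᵀ = c • I` for some `c > 0`,
zero diagonal, and all off-diagonal entries nonzero. -/
def IsOMZD {n : ℕ} (A : Matrix (Fin n) (Fin n) ℝ) : Prop :=
  (∃ c : ℝ, 0 < c ∧ A * Aᵀ = c • (1 : Matrix (Fin n) (Fin n) ℝ)) ∧
  (∀ i, A i i = 0) ∧ (∀ i j, i ≠ j → A i j ≠ 0)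

/-- The trace of an idempotent real matrix is a natural number. -/
lemma trace_idem_nat {n : ℕ} (P : Matrix (Fin n) (Fin n) ℝ) (hP : P * P = P) :
    ∃ k : ℕ, P.trace = (k : ℝ) := by
  set f := Matrix.toLin' P with hf
  have hff : f ∘ₗ f = f := by
    rw [hf, ← Matrix.toLin'_mul, hP]
  obtain ⟨p, hp⟩ := (LinearMap.isProj_iff_isIdempotentElem f).mpr hff
  refine ⟨Module.finrank ℝ p, ?_⟩
  have h1 : LinearMap.trace ℝ _ f = (Module.finrank ℝ p : ℝ) := hp.trace
  have h2 : LinearMap.trace ℝ _ f = P.trace := by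
    rw [LinearMap.trace_eq_matrix_trace ℝ (Pi.basisFun ℝ (Fin n)) f]
    congr 1
    rw [LinearMap.toMatrix_eq_toMatrix', hf, LinearMap.toMatrix'_toLin']
  rw [← h2, h1]

theorem no_symmetric_OMZD_odd (n : ℕ) (hn : Odd n) :
    ¬ ∃ A : Matrix (Fin n) (Fin n) ℝ, Aᵀ = A ∧ IsOMZD A := by
  rintro ⟨A, hsym, ⟨⟨c, hc, horth⟩, hdiag, -⟩⟩
  rw [hsym] at horth
  have hs : Real.sqrt c > 0 := Real.sqrt_pos.mpr hc
  set s := Real.sqrt c with hsdef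
  have hs2 : s * s = c := Real.mul_self_sqrt hc.le
  set P : Matrix (Fin n) (Fin n) ℝ := (2 * s)⁻¹ • A + (2:ℝ)⁻¹ • 1 with hPdef
  have hPP : P * P = P := by
    have h2s : s ≠ 0 := hs.ne'
    have key : (2*s)⁻¹ * ((2*s)⁻¹ * c) = (2:ℝ)⁻¹ * 2⁻¹ := by
      rw [mul_inv, ← hs2]; field_simp
    rw [hPdef]
    simp only [Matrix.add_mul, Matrix.mul_add, Matrix.smul_mul, Matrix.mul_smul, horth,
      Matrix.one_mul, Matrix.mul_one, smul_smul, key]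
    match_scalars <;> field_simp <;> nlinarith [hs2]
  obtain ⟨k, hk⟩ := trace_idem_nat P hPP
  have htrA : A.trace = 0 := by
    simp [Matrix.trace, Matrix.diag, hdiag]
  have htrP : P.trace = (n : ℝ) / 2 := by
    rw [hPdef]
    simp [Matrix.trace_add, Matrix.trace_smul, htrA, Matrix.trace_one]
    ring
  rw [htrP] at hk
  have : (n : ℝ) = 2 * k := by linarith
  have hn2 : n = 2 * k := by exact_mod_cast this
  have := Nat.odd_iff.mp hn
  omega
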